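/- Let n ≥ 1 and 0 < α < n, and let μ be a nonnegative locally finite Borel measure on ℝ^n. Let Q₀ ∈ 𝒬 be a dyadic cube with ℓ(Q₀) = 2^{j₀}, and suppose there exists a point z ∈ Q₀ with ℳ_α(μ)(z) ≤ s for some s > 0. Then for every integer k ≤ j₀ and every γ > 0: |{x ∈ Q₀ : μ(Q_k(x))/2^{k(n−α)} > γ}| ≤ (s/γ) · 2^{(k−j₀)α} · |Q₀|, where Q_k(x) denotes the unique dyadic cube of side length 2^k containing x and |·| denotes Lebesgue measure. -/

import Mathlib

open MeasureTheory Metric Set ENNReal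

noncomputable section

/-- The nonlinear potential `T^q_α(μ)(x) = (∫_0^∞ (μ(B(x,r))/r^{n−α})^q dr/r)^{1/q}`. -/
def Tpot (n : ℕ) (α q : ℝ) (μ : Measure (EuclideanSpace ℝ (Fin n)))
    (x : EuclideanSpace ℝ (Fin n)) : ℝ≥0∞ :=
  (∫⁻ r in Set.Ioi (0 : ℝ),
      (μ (Metric.ball x r) / ENNReal.ofReal (r ^ ((n : ℝ) - α))) ^ q
        * ENNReal.ofReal (1 / r)) ^ (1 / q)

/-- The fractional maximal function `M_α(μ)(x) = sup_{r>0} μ(B(x,r))/r^{n−α}`. -/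
def Mfrac (n : ℕ) (α : ℝ) (μ : Measure (EuclideanSpace ℝ (Fin n)))
    (x : EuclideanSpace ℝ (Fin n)) : ℝ≥0∞ :=
  ⨆ (r : ℝ) (_ : 0 < r), μ (Metric.ball x r) / ENNReal.ofReal (r ^ ((n : ℝ) - α))

/-- The closed axis-parallel cube with center `c` and side length `s`. -/
def axisCube (n : ℕ) (c : EuclideanSpace ℝ (Fin n)) (s : ℝ) :
    Set (EuclideanSpace ℝ (Fin n)) :=
  {x | ∀ i, |x i - c i| ≤ s / 2}

/-- The weighted measure `|S|_σ = ∫_S σ dx`. -/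
def wMeasure (n : ℕ) (σ : EuclideanSpace ℝ (Fin n) → ℝ)
    (S : Set (EuclideanSpace ℝ (Fin n))) : ℝ≥0∞ :=
  ∫⁻ x in S, ENNReal.ofReal (σ x)

/-- `σ` is a weak `A∞` weight with constants `Cσ, θ`: it is nonnegative, locally
integrable, and `|E|_σ ≤ Cσ (|E|/|Q|)^θ |2Q|_σ` for all cubes `Q` and measurable `E ⊆ Q`. -/
def IsWeakAInfty (n : ℕ) (σ : EuclideanSpace ℝ (Fin n) → ℝ) (Cσ θ : ℝ) : Prop :=
  0 < Cσ ∧ 0 < θ ∧ (∀ x, 0 ≤ σ x) ∧ LocallyIntegrable σ ∧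
    ∀ (c : EuclideanSpace ℝ (Fin n)) (s : ℝ), 0 < s →
      ∀ E ⊆ axisCube n c s, MeasurableSet E →
        wMeasure n σ E ≤
          ENNReal.ofReal (Cσ * ((volume E).toReal / (volume (axisCube n c s)).toReal) ^ θ)
            * wMeasure n σ (axisCube n c (2 * s))

/-- The dyadic cube `2^k(m + [0,1)^n)`. -/
def dyadicCube (n : ℕ) (k : ℤ) (m : Fin n → ℤ) : Set (EuclideanSpace ℝ (Fin n)) :=
  {x | ∀ i, (2 : ℝ) ^ k * m i ≤ x i ∧ x i < (2 : ℝ) ^ k * (m i + 1)}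

/-- The unique dyadic cube of side length `2^k` containing `x`. -/
def dyadicCubeAt (n : ℕ) (k : ℤ) (x : EuclideanSpace ℝ (Fin n)) :
    Set (EuclideanSpace ℝ (Fin n)) :=
  dyadicCube n k (fun i => ⌊x i / (2 : ℝ) ^ k⌋)

/-- The dyadic nonlinear potential `𝒯(μ)(x) = (∑_{Q ∋ x} (μ(Q)/ℓ(Q)^{n−α})^q)^{1/q}`. -/
def Tdyadic (n : ℕ) (α q : ℝ) (μ : Measure (EuclideanSpace ℝ (Fin n)))
    (x : EuclideanSpace ℝ (Fin n)) : ℝ≥0∞ :=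
  (∑' k : ℤ,
      (μ (dyadicCubeAt n k x) / ENNReal.ofReal (((2 : ℝ) ^ k) ^ ((n : ℝ) - α))) ^ q) ^ (1 / q)

/-- The dyadic fractional maximal function `ℳ_α(μ)(x) = sup_{Q ∋ x} μ(Q)/ℓ(Q)^{n−α}`. -/
def Mdyadic (n : ℕ) (α : ℝ) (μ : Measure (EuclideanSpace ℝ (Fin n)))
    (x : EuclideanSpace ℝ (Fin n)) : ℝ≥0∞ :=
  ⨆ k : ℤ, μ (dyadicCubeAt n k x) / ENNReal.ofReal (((2 : ℝ) ^ k) ^ ((n : ℝ) - α))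

/-- `F(μ)(x) = (∑_{j∈ℤ} (μ(B(x,2^j))/2^{j(n−α)})^q)^{1/q}`. -/
def Fpot (n : ℕ) (α q : ℝ) (μ : Measure (EuclideanSpace ℝ (Fin n)))
    (x : EuclideanSpace ℝ (Fin n)) : ℝ≥0∞ :=
  (∑' j : ℤ,
      (μ (Metric.ball x ((2 : ℝ) ^ j)) / ENNReal.ofReal (((2 : ℝ) ^ j) ^ ((n : ℝ) - α))) ^ q) ^ (1 / q)

/-- The exponential function extended to `ℝ≥0∞`. -/
def expE (t : ℝ≥0∞) : ℝ≥0∞ :=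
  if t = ⊤ then ⊤ else ENNReal.ofReal (Real.exp t.toReal)

/-- The centered Hardy–Littlewood maximal function of a measure. -/
def Mhl (n : ℕ) (ν : Measure (EuclideanSpace ℝ (Fin n)))
    (x : EuclideanSpace ℝ (Fin n)) : ℝ≥0∞ :=
  ⨆ (r : ℝ) (_ : 0 < r), ν (Metric.ball x r) / volume (Metric.ball x r)

lemma two_zpow_pos (k : ℤ) : (0:ℝ) < (2:ℝ) ^ k := zpow_pos (by norm_num) k

lemma measurableSet_dyadicCube (n : ℕ) (k : ℤ) (m : Fin n → ℤ) :
    MeasurableSet (dyadicCube n k m) := by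
  have : dyadicCube n k m = ⋂ i, {x : EuclideanSpace ℝ (Fin n) |
      (2:ℝ)^k * m i ≤ x i ∧ x i < (2:ℝ)^k * (m i + 1)} := by
    ext x; simp [dyadicCube, Set.mem_iInter]
  rw [this]
  refine MeasurableSet.iInter fun i => ?_
  have hm : Measurable fun x : EuclideanSpace ℝ (Fin n) => x i := by fun_prop
  exact (measurableSet_le measurable_const hm).inter (measurableSet_lt hm measurable_const)

lemma floor_eq_of_mem {n : ℕ} {k : ℤ} {m : Fin n → ℤ} {x : EuclideanSpace ℝ (Fin n)}
    (hx : x ∈ dyadicCube n k m) (i : Fin n) : ⌊x i / (2:ℝ) ^ k⌋ = m i := by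
  have h2 := two_zpow_pos k
  have h := hx i
  rw [Int.floor_eq_iff]
  constructor
  · rw [le_div_iff₀ h2]; linarith [h.1]
  · rw [div_lt_iff₀ h2]; push_cast; linarith [h.2]

lemma dyadicCubeAt_eq {n : ℕ} {k : ℤ} {m : Fin n → ℤ} {x : EuclideanSpace ℝ (Fin n)}
    (hx : x ∈ dyadicCube n k m) : dyadicCubeAt n k x = dyadicCube n k m := by
  exact congrArg (dyadicCube n k) (funext fun i => floor_eq_of_mem hx i)

lemma mem_dyadicCubeAt_self (n : ℕ) (k : ℤ) (x : EuclideanSpace ℝ (Fin n)) :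
    x ∈ dyadicCubeAt n k x := by
  intro i
  have h2 := two_zpow_pos k
  have h1 := Int.floor_le (x i / (2:ℝ)^k)
  have h3 := Int.lt_floor_add_one (x i / (2:ℝ)^k)
  constructor
  · rw [mul_comm, ← le_div_iff₀ h2]; exact h1
  · rw [mul_comm, ← div_lt_iff₀ h2]; push_cast; push_cast at h3; linarith

lemma dyadicCube_disjoint {n : ℕ} {k : ℤ} {m₁ m₂ : Fin n → ℤ} (h : m₁ ≠ m₂) :
    Disjoint (dyadicCube n k m₁) (dyadicCube n k m₂) := by
  rw [Set.disjoint_left]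
  intro x h1 h2
  exact h (funext fun i => (floor_eq_of_mem h1 i).symm.trans (floor_eq_of_mem h2 i))

lemma volume_dyadicCube (n : ℕ) (k : ℤ) (m : Fin n → ℤ) :
    volume (dyadicCube n k m) = ENNReal.ofReal (((2:ℝ)^k)^n) := by
  have hpre : dyadicCube n k m =
      (@WithLp.ofLp 2 (Fin n → ℝ)) ⁻¹'
        (Set.univ.pi fun i => Set.Ico ((2:ℝ)^k * m i) ((2:ℝ)^k * (m i + 1))) := by
    ext x
    simp [dyadicCube, Set.mem_pi, Set.mem_Ico]
  rw [hpre, (PiLp.volume_preserving_ofLp (Fin n)).measure_preimage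
    ((MeasurableSet.univ_pi fun i => measurableSet_Ico).nullMeasurableSet)]
  rw [volume_pi_pi]
  have : ∀ i : Fin n, volume (Set.Ico ((2:ℝ)^k * m i) ((2:ℝ)^k * (m i + 1)))
      = ENNReal.ofReal ((2:ℝ)^k) := by
    intro i; rw [Real.volume_Ico]; ring_nf
  simp only [this, Finset.prod_const, Finset.card_univ, Fintype.card_fin]
  rw [← ENNReal.ofReal_pow (two_zpow_pos k).le]


/-- **Level-set estimate for single-scale averages** (display (2.5)): if `Q₀` is a dyadic
cube of side `2^{j₀}` containing a point `z` with `ℳ_α(μ)(z) ≤ s`, then for `k ≤ j₀` and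
`γ > 0`, `|{x ∈ Q₀ : μ(Q_k(x))/2^{k(n−α)} > γ}| ≤ (s/γ) 2^{(k−j₀)α} |Q₀|`. -/
theorem dyadic_level_set_estimate (n : ℕ) (hn : 1 ≤ n) (α : ℝ)
    (hα : 0 < α) (hαn : α < n)
    (μ : Measure (EuclideanSpace ℝ (Fin n))) [IsLocallyFiniteMeasure μ]
    (j₀ : ℤ) (m : Fin n → ℤ) (s : ℝ) (hs : 0 < s)
    (hz : ∃ z ∈ dyadicCube n j₀ m, Mdyadic n α μ z ≤ ENNReal.ofReal s)
    (k : ℤ) (hk : k ≤ j₀) (γ : ℝ) (hγ : 0 < γ) :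
    volume {x ∈ dyadicCube n j₀ m | ENNReal.ofReal γ <
        μ (dyadicCubeAt n k x) / ENNReal.ofReal (((2 : ℝ) ^ k) ^ ((n : ℝ) - α))}
      ≤ ENNReal.ofReal (s / γ * (2 : ℝ) ^ (((k - j₀ : ℤ) : ℝ) * α)) *
          volume (dyadicCube n j₀ m) := by
  classical
  obtain ⟨z, hzQ, hzM⟩ := hz
  -- notation
  set c : ℤ → ℝ := fun j => ((2:ℝ)^j) ^ ((n:ℝ) - α) with hc_def
  set v : ℤ → ℝ := fun j => ((2:ℝ)^j) ^ n with hv_def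
  have hcpos : ∀ j, 0 < c j := fun j => Real.rpow_pos_of_pos (two_zpow_pos j) _
  have hvpos : ∀ j, 0 < v j := fun j => pow_pos (two_zpow_pos j) n
  -- rpow expressions
  have hcr : ∀ j : ℤ, c j = (2:ℝ) ^ ((j:ℝ) * ((n:ℝ) - α)) := by
    intro j
    show ((2:ℝ)^j) ^ ((n:ℝ) - α) = _
    rw [← Real.rpow_intCast (2:ℝ) j, ← Real.rpow_mul (by norm_num)]
  have hvr : ∀ j : ℤ, v j = (2:ℝ) ^ ((j:ℝ) * n) := by
    intro j
    show ((2:ℝ)^j) ^ n = _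
    rw [← Real.rpow_natCast (((2:ℝ)^j)) n, ← Real.rpow_intCast (2:ℝ) j,
      ← Real.rpow_mul (by norm_num)]
  -- bound μ Q₀
  have hμQ₀ : μ (dyadicCube n j₀ m) ≤ ENNReal.ofReal (s * c j₀) := by
    have h1 : μ (dyadicCubeAt n j₀ z) / ENNReal.ofReal (c j₀) ≤ ENNReal.ofReal s :=
      le_trans (le_iSup (fun j => μ (dyadicCubeAt n j z) /
        ENNReal.ofReal (((2:ℝ)^j) ^ ((n:ℝ) - α))) j₀) hzM
    rw [dyadicCubeAt_eq hzQ] at h1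
    rw [ENNReal.div_le_iff (by simp [ENNReal.ofReal_pos, hcpos j₀]) (by simp)] at h1
    calc μ (dyadicCube n j₀ m) ≤ ENNReal.ofReal s * ENNReal.ofReal (c j₀) := h1
      _ = ENNReal.ofReal (s * c j₀) := (ENNReal.ofReal_mul hs.le).symm
  -- the collection of subcubes
  set D : ℤ := 2 ^ (j₀ - k).toNat with hD_def
  have hDr : (D:ℝ) = (2:ℝ)^(j₀ - k) := by
    have h1 : j₀ - k = ((j₀ - k).toNat : ℤ) := (Int.toNat_of_nonneg (by omega)).symm
    rw [h1, zpow_natCast, hD_def]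
    push_cast
    ring
  have h2k2j : (2:ℝ)^j₀ = (2:ℝ)^k * D := by
    rw [hDr, ← zpow_add₀ (by norm_num : (2:ℝ) ≠ 0)]; ring_nf
  set S : Finset (Fin n → ℤ) :=
    Fintype.piFinset (fun i => Finset.Ico (D * m i) (D * (m i + 1))) with hS_def
  have hsubset : ∀ m' ∈ S, dyadicCube n k m' ⊆ dyadicCube n j₀ m := by
    intro m' hm' x hx i
    rw [hS_def, Fintype.mem_piFinset] at hm'
    obtain ⟨h1, h2⟩ := Finset.mem_Ico.mp (hm' i)
    have hx1 := (hx i).1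
    have hx2 := (hx i).2
    have h2k := two_zpow_pos k
    constructor
    · rw [h2k2j]
      have : (2:ℝ)^k * (D * m i) ≤ (2:ℝ)^k * m' i := by
        apply mul_le_mul_of_nonneg_left _ h2k.le
        exact_mod_cast h1
      push_cast at this ⊢
      linarith
    · rw [h2k2j]
      have h3 : (m' i : ℝ) + 1 ≤ D * (m i + 1) := by exact_mod_cast h2
      have : (2:ℝ)^k * (m' i + 1) ≤ (2:ℝ)^k * (D * (m i + 1)) :=
        mul_le_mul_of_nonneg_left h3 h2k.le
      push_cast at this ⊢
      linarith
  have hmemS : ∀ x ∈ dyadicCube n j₀ m, (fun i => ⌊x i / (2:ℝ)^k⌋) ∈ S := by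
    intro x hx
    rw [hS_def, Fintype.mem_piFinset]
    intro i
    rw [Finset.mem_Ico]
    have h2k := two_zpow_pos k
    have hx1 := (hx i).1
    have hx2 := (hx i).2
    rw [h2k2j] at hx1 hx2
    constructor
    · apply Int.le_floor.mpr
      rw [le_div_iff₀ h2k]
      push_cast at hx1 ⊢
      linarith
    · apply Int.floor_lt.mpr
      rw [div_lt_iff₀ h2k]
      push_cast at hx2 ⊢
      linarith
  set P : (Fin n → ℤ) → Prop := fun m' =>
    ENNReal.ofReal γ < μ (dyadicCube n k m') / ENNReal.ofReal (c k) with hP_def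
  set S' : Finset (Fin n → ℤ) := S.filter P with hS'_def
  -- covering of the level set
  have hcover : {x ∈ dyadicCube n j₀ m | ENNReal.ofReal γ <
        μ (dyadicCubeAt n k x) / ENNReal.ofReal (((2:ℝ)^k) ^ ((n:ℝ) - α))}
      ⊆ ⋃ m' ∈ S', dyadicCube n k m' := by
    intro x hx
    obtain ⟨hx1, hx2⟩ := hx
    refine Set.mem_biUnion ?_ (mem_dyadicCubeAt_self n k x)
    rw [hS'_def]
    exact Finset.mem_coe.mpr (Finset.mem_filter.mpr ⟨hmemS x hx1, hx2⟩)
  -- volume bound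
  have hvol : volume {x ∈ dyadicCube n j₀ m | ENNReal.ofReal γ <
        μ (dyadicCubeAt n k x) / ENNReal.ofReal (((2:ℝ)^k) ^ ((n:ℝ) - α))}
      ≤ (S'.card : ℝ≥0∞) * ENNReal.ofReal (v k) := by
    refine le_trans (measure_mono hcover) ?_
    refine le_trans (measure_biUnion_finset_le S' _) ?_
    rw [Finset.sum_congr rfl (fun m' _ => volume_dyadicCube n k m')]
    simp [hv_def]
  -- counting bound
  have hcount : (S'.card : ℝ≥0∞) * ENNReal.ofReal (γ * c k) ≤ ENNReal.ofReal (s * c j₀) := by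
    have hl : ∀ m' ∈ S', ENNReal.ofReal (γ * c k) ≤ μ (dyadicCube n k m') := by
      intro m' hm'
      have hp : P m' := (Finset.mem_filter.mp hm').2
      rw [hP_def] at hp
      rw [ENNReal.lt_div_iff_mul_lt (Or.inl (by simp [ENNReal.ofReal_pos, hcpos k]))
        (Or.inl (by simp))] at hp
      rw [ENNReal.ofReal_mul hγ.le]
      exact hp.le
    calc (S'.card : ℝ≥0∞) * ENNReal.ofReal (γ * c k)
        = S'.card • ENNReal.ofReal (γ * c k) := by rw [nsmul_eq_mul]
      _ ≤ ∑ m' ∈ S', μ (dyadicCube n k m') := Finset.card_nsmul_le_sum S' _ _ hl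
      _ = μ (⋃ m' ∈ S', dyadicCube n k m') := by
          rw [measure_biUnion_finset ?_ (fun m' _ => measurableSet_dyadicCube n k m')]
          intro a _ b _ hab
          exact dyadicCube_disjoint hab
      _ ≤ μ (dyadicCube n j₀ m) := by
          apply measure_mono
          refine Set.iUnion₂_subset fun m' hm' => hsubset m' (Finset.mem_filter.mp hm').1
      _ ≤ ENNReal.ofReal (s * c j₀) := hμQ₀
  -- turn into a real inequality
  have hcount' : (S'.card : ℝ) * (γ * c k) ≤ s * c j₀ := by
    rw [← ENNReal.ofReal_natCast, ← ENNReal.ofReal_mul (by positivity)] at hcount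
    exact (ENNReal.ofReal_le_ofReal_iff (by positivity)).mp hcount
  -- final numeric computation
  rw [volume_dyadicCube n j₀ m]
  refine le_trans hvol ?_
  rw [← ENNReal.ofReal_natCast, ← ENNReal.ofReal_mul (by positivity),
    ← ENNReal.ofReal_mul (by positivity)]
  apply ENNReal.ofReal_le_ofReal
  have hN : (S'.card : ℝ) ≤ s * c j₀ / (γ * c k) := by
    rw [le_div_iff₀ (by positivity)]
    exact hcount'
  calc (S'.card : ℝ) * v k ≤ (s * c j₀ / (γ * c k)) * v k := by
        apply mul_le_mul_of_nonneg_right hN (hvpos k).le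
    _ = s / γ * (2:ℝ) ^ (((k - j₀ : ℤ) : ℝ) * α) * v j₀ := by
        rw [hcr j₀, hcr k, hvr k, hvr j₀]
        have hB : (0:ℝ) < (2:ℝ)^((k:ℝ)*((n:ℝ)-α)) := Real.rpow_pos_of_pos two_pos _
        have key : (2:ℝ) ^ ((j₀:ℝ)*((n:ℝ)-α)) * (2:ℝ)^((k:ℝ)*(n:ℝ)) =
            (2:ℝ) ^ (((k:ℝ) - (j₀:ℝ))*α) * (2:ℝ)^((j₀:ℝ)*(n:ℝ)) * (2:ℝ)^((k:ℝ)*((n:ℝ)-α)) := by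
          rw [← Real.rpow_add two_pos, ← Real.rpow_add two_pos, ← Real.rpow_add two_pos]
          congr 1
          ring
        field_simp
        push_cast
        rw [mul_comm (n:ℝ) (k:ℝ), mul_comm ((n:ℝ)-α) (k:ℝ), mul_comm α]
        linear_combination key


end
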